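/- Let (V, ⟨−,−⟩, s) be a Serre lattice over ℚ of surface* type with structure element o. Let (v, w) be an exceptional pair (⟨v,v⟩ = ⟨w,w⟩ = 1 and ⟨w,v⟩ = 0) with r(v) > 0 and r(w) > 0, set h := ⟨v, w⟩ and u := (1/r(w))·w − (1/r(v))·v. If ⟨u, u⟩ > 0 and ⟨u, (s−1)o⟩ > 0, then |r(w) − h·r(v)| < r(w) or |r(v) − h·r(w)| < r(v); in other words, the left mutation σ(v,w) = (w − h·v, v) or the right mutation σ⁻¹(v,w) = (w, v − h·w) strictly decreases the quantity |r(v)| + |r(w)|. -/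

import Mathlib

/-- The antisymmetric part of `B` vanishes on `ker (s-1)^2`. -/
lemma skew_vanishes (V : Type*) [AddCommGroup V] [Module ℚ V]
    [FiniteDimensional ℚ V]
    (B : V →ₗ[ℚ] V →ₗ[ℚ] ℚ) (s : V →ₗ[ℚ] V)
    (hserre : ∀ v w, B v (s w) = B w v)
    (hrank : Module.finrank ℚ (LinearMap.range (s - 1)) ≤ 2)
    (hstar : (s - 1) ^ 2 ≠ 0)
    (x y : V) (hx : x ∈ LinearMap.ker ((s - 1) ^ 2))
    (hy : y ∈ LinearMap.ker ((s - 1) ^ 2)) :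
    B x ((s - 1) y) = 0 := by
  set N : V →ₗ[ℚ] V := s - 1 with hN
  have hBN : ∀ a b : V, B a (N b) = B b a - B a b := by
    intro a b
    have : N b = s b - b := by simp [hN, LinearMap.sub_apply]
    rw [this, map_sub, hserre]
  have hsq : ∀ a : V, N (N a) = (N ^ 2) a := by
    intro a; rw [pow_two, Module.End.mul_apply]
  -- W := range N ⊓ ker N has dimension ≤ 1
  set W : Submodule ℚ V := LinearMap.range N ⊓ LinearMap.ker N with hW
  have hdimW : Module.finrank ℚ W ≤ 1 := by
    set g : ↥(LinearMap.range N) →ₗ[ℚ] V := N ∘ₗ (LinearMap.range N).subtype with hg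
    have h1 := LinearMap.finrank_range_add_finrank_ker g
    have hrg : LinearMap.range g = LinearMap.range (N ^ 2) := by
      rw [hg, LinearMap.range_comp, Submodule.range_subtype, pow_two,
        Module.End.mul_eq_comp, LinearMap.range_comp]
    have hrgpos : 0 < Module.finrank ℚ (LinearMap.range g) := by
      rw [hrg]
      have : LinearMap.range (N ^ 2) ≠ ⊥ := by
        simpa [LinearMap.range_eq_bot] using hstar
      have : Nontrivial (LinearMap.range (N ^ 2)) :=
        Submodule.nontrivial_iff_ne_bot.mpr this
      exact Module.finrank_pos
    have hkg : Module.finrank ℚ (LinearMap.ker g) = Module.finrank ℚ W := by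
      have h2 : LinearMap.ker g = Submodule.comap (LinearMap.range N).subtype
          (LinearMap.ker N) := by rw [hg, LinearMap.ker_comp]
      rw [h2, ← Submodule.finrank_map_subtype_eq, Submodule.map_comap_subtype]
    omega
  -- both N x and N y lie in W
  have hNxW : N x ∈ W :=
    Submodule.mem_inf.mpr ⟨⟨x, rfl⟩, show N (N x) = 0 by rw [hsq]; exact hx⟩
  have hNyW : N y ∈ W :=
    Submodule.mem_inf.mpr ⟨⟨y, rfl⟩, show N (N y) = 0 by rw [hsq]; exact hy⟩
  obtain ⟨v₀, hv₀⟩ := finrank_le_one_iff.mp hdimW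
  obtain ⟨c₁, hc₁⟩ := hv₀ ⟨N x, hNxW⟩
  obtain ⟨c₂, hc₂⟩ := hv₀ ⟨N y, hNyW⟩
  have hc₁' : c₁ • (v₀ : V) = N x := congrArg Subtype.val hc₁
  have hc₂' : c₂ • (v₀ : V) = N y := congrArg Subtype.val hc₂
  by_cases hz : c₁ = 0
  · -- then N x = 0, use antisymmetry
    have hNx0 : N x = 0 := by rw [← hc₁', hz, zero_smul]
    have : B x (N y) = - B y (N x) := by rw [hBN, hBN]; ring
    rw [this, hNx0, map_zero, neg_zero]
  · -- N y is a multiple of N x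
    have hv₀eq : (v₀ : V) = c₁⁻¹ • N x := by
      rw [← hc₁', smul_smul, inv_mul_cancel₀ hz, one_smul]
    have hNy : N y = (c₂ * c₁⁻¹) • N x := by
      rw [← hc₂', hv₀eq, smul_smul]
    have hself : B x (N x) = 0 := by rw [hBN]; ring
    rw [hNy, map_smul, smul_eq_mul, hself, mul_zero]

/-- Rudakov's rank reduction lemma: let `(v,w)` be an exceptional pair with
`r(v), r(w) > 0` in a Serre lattice over ℚ of surface* type with structure element `o`; set
`h := ⟨v,w⟩` and `u := (1/r(w))·w − (1/r(v))·v`. If `⟨u,u⟩ > 0` and `⟨u,(s−1)o⟩ > 0`, then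
the mutation `σ(v,w)` or `σ⁻¹(v,w)` strictly decreases `|r(v)| + |r(w)|`:
`|r(w) − h·r(v)| < r(w)` or `|r(v) − h·r(w)| < r(v)`. -/
theorem rank_reduction (V : Type*) [AddCommGroup V] [Module ℚ V]
    [FiniteDimensional ℚ V]
    (B : V →ₗ[ℚ] V →ₗ[ℚ] ℚ) (hB : ∀ v, (∀ w, B v w = 0) → v = 0)
    (s : V →ₗ[ℚ] V) (hbij : Function.Bijective s)
    (hserre : ∀ v w, B v (s w) = B w v)
    (huni : (s - 1) ^ Module.finrank ℚ V = 0)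
    (hrank : Module.finrank ℚ (LinearMap.range (s - 1)) ≤ 2)
    (hstar : (s - 1) ^ 2 ≠ 0)
    (o : V) (ho : IsCompl (Submodule.span ℚ {o}) (LinearMap.ker ((s - 1) ^ 2)))
    (v w v₁ w₁ : V) (rv rw : ℚ)
    (hv₁ : v₁ ∈ LinearMap.ker ((s - 1) ^ 2)) (hw₁ : w₁ ∈ LinearMap.ker ((s - 1) ^ 2))
    (hv : v = rv • o + v₁) (hw : w = rw • o + w₁)
    (hrv : 0 < rv) (hrw : 0 < rw)
    (hvv : B v v = 1) (hww : B w w = 1) (hwv : B w v = 0)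
    (u : V) (hu : u = rw⁻¹ • w - rv⁻¹ • v)
    (huu : 0 < B u u) (huω : 0 < B u ((s - 1) o)) :
    |rw - B v w * rv| < rw ∨ |rv - B v w * rw| < rv := by
  have hBN : ∀ a b : V, B a ((s - 1) b) = B b a - B a b := by
    intro a b
    have hab : (s - 1) b = s b - b := by simp [LinearMap.sub_apply]
    rw [hab, map_sub, hserre]
  have hC : B v₁ ((s - 1) w₁) = 0 :=
    skew_vanishes V B s hserre hrank hstar v₁ w₁ hv₁ hw₁
  have hC' : B w₁ v₁ - B v₁ w₁ = 0 := by rw [← hBN v₁ w₁]; exact hC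
  have hkey : B v w = rv * rw * B u ((s - 1) o) := by
    rw [hBN u o]
    subst hu hv hw
    simp only [map_add, map_sub, map_smul, LinearMap.add_apply, LinearMap.sub_apply,
      LinearMap.smul_apply, smul_eq_mul] at hwv hC' ⊢
    field_simp
    linear_combination hwv - hC'
  have hpos : 0 < B v w := by
    rw [hkey]; exact mul_pos (mul_pos hrv hrw) huω
  have hexp : B u u = rw⁻¹ * rw⁻¹ + rv⁻¹ * rv⁻¹ - rv⁻¹ * rw⁻¹ * B v w := by
    rw [hu]
    simp only [map_sub, map_smul, LinearMap.sub_apply, LinearMap.smul_apply, smul_eq_mul]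
    rw [hvv, hww, hwv]; ring
  have h2 : B v w * rv * rw < rv ^ 2 + rw ^ 2 := by
    have e : B u u * (rv ^ 2 * rw ^ 2) = rv ^ 2 + rw ^ 2 - B v w * rv * rw := by
      rw [hexp]; field_simp
    have hp : 0 < B u u * (rv ^ 2 * rw ^ 2) := mul_pos huu (by positivity)
    rw [e] at hp; linarith
  rcases lt_or_ge (B v w * rv) (2 * rw) with hcase | hcase
  · left
    rw [abs_lt]
    constructor
    · nlinarith [mul_pos hpos hrv]
    · nlinarith [mul_pos hpos hrv]
  · right
    rw [abs_lt]
    constructor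
    · nlinarith [mul_pos hpos hrw, mul_pos hpos hrv, mul_pos hrv hrw,
        mul_le_mul_of_nonneg_right hcase (le_of_lt hrw), sq_nonneg (rv - rw),
        sq_nonneg (rv + rw)]
    · nlinarith [mul_pos hpos hrw]
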